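/- With the dominant-term setup below, suppose x⁰ ∈ ℝⁿ satisfies p_dom(x⁰) ≠ 0. Then lim_{t→0⁺} p_dom(x(t)) / p(x(t)) = 1 (in particular p(x(t)) ≠ 0 for all sufficiently small t > 0). -/

import Mathlib

open MvPolynomial

/-- If the dominant term does not vanish at `x⁰`, then along the weighted curve `x(t)` the
ratio `p_dom(x(t)) / p(x(t))` tends to `1` as `t → 0⁺`; in particular `p(x(t)) ≠ 0` for all
sufficiently small `t > 0`. -/
theorem stmt8 {n k : ℕ} (hk1 : 1 ≤ k) (hkn : k ≤ n)
    (p : MvPolynomial (Fin n) ℝ)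
    (hsupp : p.support.Nonempty)
    (η : Fin k → ℝ) (hη : ∀ i, 0 < η i)
    (W : (Fin n →₀ ℕ) → ℝ)
    (hW : ∀ m : Fin n →₀ ℕ, W m = ∑ i : Fin k, η i * (m (Fin.castLE hkn i) : ℝ))
    (d : ℝ) (hd : d = p.support.inf' hsupp W)
    (pdom : MvPolynomial (Fin n) ℝ)
    (hpdom : pdom = ∑ m ∈ p.support.filter (fun m => W m = d),
        MvPolynomial.monomial m (MvPolynomial.coeff m p))
    (x0 : Fin n → ℝ)
    (hx0 : eval x0 pdom ≠ 0)
    (xt : ℝ → Fin n → ℝ)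
    (hxt : ∀ t : ℝ, ∀ j : Fin n,
      xt t j = if h : (j : ℕ) < k then t ^ (η ⟨j, h⟩) * x0 j else x0 j) :
    Filter.Tendsto (fun t : ℝ => eval (xt t) pdom / eval (xt t) p)
      (nhdsWithin 0 (Set.Ioi 0)) (nhds 1) ∧
    (∀ᶠ t in nhdsWithin (0 : ℝ) (Set.Ioi 0), eval (xt t) p ≠ 0) := by
  classical
  set X : (Fin n →₀ ℕ) → ℝ := fun m => ∏ j, x0 j ^ m j with hXdef
  set A : ℝ := eval x0 pdom with hAdef
  have hevalx0 : A = ∑ m ∈ p.support.filter (fun m => W m = d), coeff m p * X m := by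
    rw [hAdef, hpdom, map_sum]
    refine Finset.sum_congr rfl fun m _ => ?_
    rw [eval_monomial, Finsupp.prod_pow]
  -- key evaluation along the curve
  have hE : ∀ t : ℝ, 0 < t → ∀ m : Fin n →₀ ℕ,
      (∏ j, xt t j ^ m j) = t ^ W m * X m := by
    intro t ht m
    set e : Fin n → ℝ := fun j => if h : (j : ℕ) < k then η ⟨j, h⟩ * (m j : ℝ) else 0
      with hedef
    have h1 : ∀ j : Fin n, xt t j ^ m j = t ^ e j * x0 j ^ m j := by
      intro j
      rw [hxt]
      by_cases h : (j : ℕ) < k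
      · simp only [hedef, dif_pos h]
        rw [mul_pow, ← Real.rpow_natCast (t ^ η ⟨j, h⟩) (m j), ← Real.rpow_mul ht.le]
      · simp only [hedef, dif_neg h]
        rw [Real.rpow_zero, one_mul]
    have hsum : W m = ∑ j, e j := by
      rw [hW]
      have h2 : ∑ i : Fin k, η i * (m (Fin.castLE hkn i) : ℝ)
          = ∑ j ∈ Finset.univ.map (Fin.castLEEmb hkn), e j := by
        rw [Finset.sum_map]
        refine Finset.sum_congr rfl fun i _ => ?_
        have hi : ((Fin.castLEEmb hkn i : Fin n) : ℕ) < k := by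
          simp
        simp only [hedef, dif_pos hi]
        congr 1
      rw [h2]
      refine Finset.sum_subset (Finset.subset_univ _) ?_
      intro j _ hj
      have hjk : ¬ (j : ℕ) < k := by
        intro h
        exact hj (Finset.mem_map.mpr ⟨⟨(j : ℕ), h⟩, Finset.mem_univ _, by
          simp [Fin.castLEEmb, Fin.ext_iff]⟩)
      simp [hedef, hjk]
    calc (∏ j, xt t j ^ m j) = ∏ j, (t ^ e j * x0 j ^ m j) :=
          Finset.prod_congr rfl fun j _ => h1 j
      _ = (∏ j, t ^ e j) * X m := Finset.prod_mul_distrib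
      _ = t ^ W m * X m := by rw [hsum, Real.rpow_sum_of_pos ht]
  have hdle : ∀ m ∈ p.support, d ≤ W m := fun m hm => hd ▸ Finset.inf'_le W hm
  set g : ℝ → ℝ := fun t => ∑ m ∈ p.support, coeff m p * t ^ (W m - d) * X m with hgdef
  have hevalp : ∀ t : ℝ, 0 < t → eval (xt t) p = t ^ d * g t := by
    intro t ht
    rw [eval_eq', hgdef, Finset.mul_sum]
    refine Finset.sum_congr rfl fun m hm => ?_
    rw [hE t ht m]
    have : t ^ W m = t ^ d * t ^ (W m - d) := by
      rw [← Real.rpow_add ht]; congr 1; ring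
    rw [this]; ring
  have hevalpdom : ∀ t : ℝ, 0 < t → eval (xt t) pdom = t ^ d * A := by
    intro t ht
    rw [hpdom, map_sum, hevalx0, Finset.mul_sum]
    refine Finset.sum_congr rfl fun m hm => ?_
    have hmd : W m = d := (Finset.mem_filter.mp hm).2
    rw [eval_monomial, Finsupp.prod_pow, hE t ht m, hmd]
    ring
  have hAne : A ≠ 0 := hx0
  -- g tends to A as t → 0⁺
  have hg : Filter.Tendsto g (nhdsWithin 0 (Set.Ioi 0)) (nhds A) := by
    have hAeq : A = ∑ m ∈ p.support,
        coeff m p * (if W m = d then (1 : ℝ) else 0) * X m := by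
      rw [hevalx0, Finset.sum_filter]
      refine Finset.sum_congr rfl fun m _ => ?_
      split_ifs <;> ring
    rw [hAeq]
    refine tendsto_finset_sum _ fun m hm => ?_
    by_cases hmd : W m = d
    · have : (fun t : ℝ => coeff m p * t ^ (W m - d) * X m)
          = fun _ : ℝ => coeff m p * (if W m = d then (1:ℝ) else 0) * X m := by
        funext t
        simp [hmd, Real.rpow_zero]
      rw [this]
      exact tendsto_const_nhds
    · have hpos : 0 < W m - d := sub_pos.mpr (lt_of_le_of_ne (hdle m hm) (Ne.symm hmd))
      have h0 : Filter.Tendsto (fun t : ℝ => t ^ (W m - d))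
          (nhdsWithin 0 (Set.Ioi 0)) (nhds 0) := by
        have hc := (Real.continuousAt_rpow_const 0 (W m - d)
          (Or.inr hpos.le)).continuousWithinAt (s := Set.Ioi 0)
        have : (0 : ℝ) ^ (W m - d) = 0 := Real.zero_rpow hpos.ne'
        simpa [ContinuousWithinAt, this] using hc
      have := (h0.const_mul (coeff m p)).mul_const (X m)
      simpa [if_neg hmd] using this
  have hgne : ∀ᶠ t in nhdsWithin (0:ℝ) (Set.Ioi 0), g t ≠ 0 := hg.eventually_ne hAne
  constructor
  · have heq : ∀ᶠ t in nhdsWithin (0:ℝ) (Set.Ioi 0),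
        A / g t = eval (xt t) pdom / eval (xt t) p := by
      filter_upwards [self_mem_nhdsWithin] with t ht
      have ht' : (0:ℝ) < t := ht
      rw [hevalpdom t ht', hevalp t ht',
        mul_div_mul_left _ _ (Real.rpow_pos_of_pos ht' d).ne']
    have htend : Filter.Tendsto (fun t : ℝ => A / g t)
        (nhdsWithin 0 (Set.Ioi 0)) (nhds 1) := by
      have := Filter.Tendsto.div (tendsto_const_nhds (x := A)) hg hAne
      rw [div_self hAne] at this
      exact this
    exact htend.congr' heq
  · filter_upwards [hgne, self_mem_nhdsWithin] with t hgt ht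
    have ht' : (0:ℝ) < t := ht
    rw [hevalp t ht']
    exact mul_ne_zero (Real.rpow_pos_of_pos ht' d).ne' hgt
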